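/- With c(D) as defined via signed counts of concatenations of elementary paths: for any Dyck path D, c(D) = 0 if D contains a framed subpath of type (0), and otherwise c(D) = (−1)^m where m is the number of framed subpaths of D of type (−1). In particular c(D) ∈ {−1, 0, 1}. -/

import Mathlib

open List

/-- The sequence `A 0 = 0`, `A 1 = 1`, `A (n+2) = a * A (n+1) - A n + 1` (for `a ≥ 3`
this agrees with the integer recurrence; subtraction does not truncate). -/
def AN (a : ℕ) : ℕ → ℕ
  | 0 => 0
  | 1 => 1
  | n + 2 => a * AN a (n + 1) + 1 - AN a n

/-- Elementary path `L_{u×v}`: `u` east steps (`false`) followed by `v` north steps (`true`). -/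
def L (u v : ℕ) : List Bool := List.replicate u false ++ List.replicate v true

def east (w : List Bool) : ℕ := w.count false
def north (w : List Bool) : ℕ := w.count true

/-- A word is a Dyck path (of its own size): it never goes above the diagonal. -/
def IsDyckWord (w : List Bool) : Prop :=
  ∀ p : List Bool, p <+: w → east w * north p ≤ north w * east p

/-- A Dyck path of size `r × s`. -/
def IsDyckSize (r s : ℕ) (w : List Bool) : Prop :=
  east w = r ∧ north w = s ∧ ∀ p : List Bool, p <+: w → r * north p ≤ s * east p

def powWord (w : List Bool) (d : ℕ) : List Bool := (List.replicate d w).flatten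

/-- An essential (primitive) path: not a `d`-fold concatenation of a shorter path, `d ≥ 2`. -/
def Essential (w : List Bool) : Prop :=
  w ≠ [] ∧ ∀ (w₀ : List Bool) (d : ℕ), 2 ≤ d → w ≠ powWord w₀ d

/-- The cyclic-equivalence class (orbit under rotation) of a word. -/
def Orbit (w : List Bool) : Set (List Bool) := {w' | ∃ n : ℕ, w' = w.rotate n}

/-- `L_{u×v}` is of type `(-1)`: `A n ≤ min(u,v)`, `max(u,v) < A (n+1)` with `n` even, `n > 0`. -/
def TypeNeg (a u v : ℕ) : Prop :=
  ∃ n : ℕ, 1 ≤ n ∧ AN a (2 * n) ≤ min u v ∧ max u v < AN a (2 * n + 1)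

/-- `L_{u×v}` is of type `(0)`: `A n ≤ min(u,v) < A (n+1) ≤ max(u,v)` with `n > 0`. -/
def TypeZero (a u v : ℕ) : Prop :=
  ∃ n : ℕ, 1 ≤ n ∧ AN a n ≤ min u v ∧ min u v < AN a (n + 1) ∧ AN a (n + 1) ≤ max u v

/-- `sub` occurs in `D` as a framed subpath (endpoints are 21-corners of `D`). -/
def FramedOcc (D sub : List Bool) : Prop :=
  ∃ pre post : List Bool, D = pre ++ sub ++ post ∧
    (pre = [] ∨ ∃ p, pre = p ++ [true]) ∧ (post = [] ∨ ∃ q, post = false :: q)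

def HasFramedZero (a : ℕ) (D : List Bool) : Prop :=
  ∃ u v : ℕ, TypeZero a u v ∧ FramedOcc D (L u v)

def HasFramedNeg (a : ℕ) (D : List Bool) : Prop :=
  ∃ u v : ℕ, TypeNeg a u v ∧ FramedOcc D (L u v)

/-- The number of framed subpaths of type `(-1)` of `D` (occurrences indexed by the
prefix before them together with the size `(u,v)`). -/
noncomputable def negCount (a : ℕ) (D : List Bool) : ℕ :=
  Set.ncard {x : List Bool × ℕ × ℕ | TypeNeg a x.2.1 x.2.2 ∧
    ∃ post : List Bool, D = x.1 ++ L x.2.1 x.2.2 ++ post ∧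
      (x.1 = [] ∨ ∃ p, x.1 = p ++ [true]) ∧ (post = [] ∨ ∃ q, post = false :: q)}

/-- The elementary blocks used in concatenations: `(i, false)` is `L_{A(i+1)×A i}`,
`(i, true)` is `L_{A i×A(i+1)}`. -/
def block (a : ℕ) : ℕ × Bool → List Bool
  | (i, false) => L (AN a (i + 1)) (AN a i)
  | (i, true) => L (AN a i) (AN a (i + 1))

/-- The sign of a concatenation: `(-1)^(number of blocks with odd index)`. -/
def sgnC (s : List (ℕ × Bool)) : ℤ := (-1) ^ (s.filter (fun x => x.1 % 2 == 1)).length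

/-- The set `S(D)` of concatenations of elementary blocks realizing `D`. -/
def SDyck (a : ℕ) (D : List Bool) : Set (List (ℕ × Bool)) :=
  {s | (s.map (block a)).flatten = D}

/-- The contribution multiplicity `c(D) = Σ_{s ∈ S(D)} sgn(s)`. -/
noncomputable def cMult (a : ℕ) (D : List Bool) : ℤ := ∑ᶠ s ∈ SDyck a D, sgnC s

-- The contribution multiplicity of an equivalence class, computed on a Dyck-word
-- representative (it is independent of the choice).
open Classical in
noncomputable def cClass (a : ℕ) (C : Set (List Bool)) : ℤ :=
  if h : ∃ w, w ∈ C ∧ IsDyckWord w then cMult a h.choose else 0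



section Basics
variable {a : ℕ}

lemma AN_two_step (n : ℕ) : AN a (n+2) = a * AN a (n+1) + 1 - AN a n := rfl
lemma AN_zero : AN a 0 = 0 := rfl
lemma AN_one : AN a 1 = 1 := rfl

lemma AN_succ_lt (ha : 3 ≤ a) : ∀ n, AN a n < AN a (n+1) := by
  intro n
  induction n using Nat.strong_induction_on with
  | _ n ih =>
    match n with
    | 0 => rw [AN_zero, AN_one]; omega
    | 1 =>
      show AN a 1 < AN a 2
      have h2 : AN a 2 = a * AN a 1 + 1 - AN a 0 := rfl
      rw [AN_one, AN_zero] at h2; rw [AN_one]; omega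
    | (m + 2) =>
      show AN a (m+2) < AN a (m+3)
      have ih1 : AN a m < AN a (m+1) := ih m (by omega)
      have ih2 : AN a (m+1) < AN a (m+2) := ih (m+1) (by omega)
      have h3 : AN a (m+3) = a * AN a (m+2) + 1 - AN a (m+1) := rfl
      have hm : 3 * AN a (m+2) ≤ a * AN a (m+2) := Nat.mul_le_mul_right _ ha
      omega

lemma AN_mono (ha : 3 ≤ a) : StrictMono (AN a) := strictMono_nat_of_lt_succ (AN_succ_lt ha)

lemma AN_le_self (ha : 3 ≤ a) (n : ℕ) : n ≤ AN a n := by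
  induction n with
  | zero => simp [AN_zero]
  | succ n ih => have := AN_succ_lt ha n; omega

lemma AN_pos (ha : 3 ≤ a) {n : ℕ} (hn : 1 ≤ n) : 1 ≤ AN a n := le_trans hn (AN_le_self ha n)

lemma AN_le_of_le (ha : 3 ≤ a) {m n : ℕ} (h : m ≤ n) : AN a m ≤ AN a n := (AN_mono ha).monotone h

lemma AN_uniq (ha : 3 ≤ a) {j k x : ℕ} (hj1 : AN a j ≤ x) (hj2 : x < AN a (j+1))
    (hk1 : AN a k ≤ x) (hk2 : x < AN a (k+1)) : j = k := by
  rcases lt_trichotomy j k with h | h | h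
  · have := AN_le_of_le ha (show j+1 ≤ k by omega); omega
  · exact h
  · have := AN_le_of_le ha (show k+1 ≤ j by omega); omega

end Basics

section Lists
-- tail condition: empty or starts with an east step
def Tail (E : List Bool) : Prop := E = [] ∨ ∃ q, E = false :: q
-- head condition: empty or ends with a north step
def Head21 (p : List Bool) : Prop := p = [] ∨ ∃ q, p = q ++ [true]

lemma SL1 : ∀ (u u' : ℕ) (r r' : List Bool),
    replicate u false ++ true :: r = replicate u' false ++ true :: r' → u = u' ∧ r = r' := by
  intro u
  induction u with
  | zero =>
    intro u' r r' h
    cases u' with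
    | zero => simpa using h
    | succ m => simp [replicate_succ] at h
  | succ n ih =>
    intro u' r r' h
    cases u' with
    | zero => simp [replicate_succ] at h
    | succ m =>
      simp only [replicate_succ, cons_append, cons.injEq] at h
      obtain ⟨h1, h2⟩ := ih m r r' h.2
      exact ⟨by omega, h2⟩

lemma SL0 : ∀ (v v' : ℕ) (post post' : List Bool), Tail post → Tail post' →
    replicate v true ++ post = replicate v' true ++ post' → v = v' ∧ post = post' := by
  intro v
  induction v with
  | zero =>
    intro v' post post' hp hp' h
    cases v' with
    | zero => simpa using h
    | succ m =>
      simp only [replicate_zero, nil_append, replicate_succ, cons_append] at h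
      rcases hp with rfl | ⟨q, rfl⟩
      · exact absurd h.symm (by simp)
      · simp at h
  | succ n ih =>
    intro v' post post' hp hp' h
    cases v' with
    | zero =>
      simp only [replicate_zero, nil_append, replicate_succ, cons_append] at h
      rcases hp' with rfl | ⟨q, rfl⟩
      · exact absurd h (by simp)
      · simp at h
    | succ m =>
      simp only [replicate_succ, cons_append, cons.injEq, true_and] at h
      obtain ⟨h1, h2⟩ := ih m post post' hp hp' h
      exact ⟨by omega, h2⟩

lemma SL2 : ∀ (U : ℕ) (p : List Bool) (V : ℕ) (q : List Bool),
    replicate U false ++ replicate V true ≠ p ++ true :: false :: q := by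
  intro U
  induction U with
  | zero =>
    intro p V q h
    simp only [replicate_zero, nil_append] at h
    have : false ∈ replicate V true := by
      rw [h]; simp
    simpa using eq_of_mem_replicate this
  | succ n ih =>
    intro p V q h
    rw [replicate_succ] at h
    cases p with
    | nil => simp at h
    | cons b p' =>
      simp only [cons_append, cons.injEq] at h
      exact ih p' V q h.2

lemma SL3 : ∀ (v V : ℕ) (r E : List Bool), Tail E →
    replicate v true ++ r = replicate V true ++ E →
    v ≤ V ∧ r = replicate (V - v) true ++ E := by
  intro v
  induction v with
  | zero => intro V r E hE h; simpa using h
  | succ n ih =>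
    intro V r E hE h
    cases V with
    | zero =>
      simp only [replicate_succ, cons_append, replicate_zero, nil_append] at h
      rcases hE with rfl | ⟨q, rfl⟩
      · exact absurd h (by simp)
      · simp at h
    | succ m =>
      simp only [replicate_succ, cons_append, cons.injEq, true_and] at h
      obtain ⟨h1, h2⟩ := ih m r E hE h
      exact ⟨by omega, by simpa [Nat.succ_sub_succ] using h2⟩

lemma L_eq_cons_false {u v : ℕ} (hu : 1 ≤ u) : L u v = false :: L (u-1) v := by
  obtain ⟨u', rfl⟩ : ∃ u', u = u' + 1 := ⟨u - 1, by omega⟩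
  simp [L, replicate_succ]

lemma L_split {u v : ℕ} (hv : 1 ≤ v) :
    L u v = replicate u false ++ true :: replicate (v-1) true := by
  obtain ⟨v', rfl⟩ : ∃ v', v = v' + 1 := ⟨v - 1, by omega⟩
  simp [L, replicate_succ]

/-- key factorization: `pre ++ L u v ++ post = f^u t^v …` is rigid -/
lemma LL {u v u' v' : ℕ} {post post' : List Bool} (hv : 1 ≤ v) (hv' : 1 ≤ v')
    (hp : Tail post) (hp' : Tail post')
    (h : L u v ++ post = L u' v' ++ post') : u = u' ∧ v = v' ∧ post = post' := by
  rw [L_split hv, L_split hv'] at h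
  simp only [append_assoc, cons_append] at h
  obtain ⟨h1, h2⟩ := SL1 u u' _ _ h
  obtain ⟨h3, h4⟩ := SL0 (v-1) (v'-1) post post' hp hp' h2
  exact ⟨h1, by omega, h4⟩

end Lists

section Splits
variable {a : ℕ}

/-- prefix characterization at a corner -/
lemma prefix_corner {u v U V : ℕ} {E : List Bool} (hv : 1 ≤ v) (hV : 1 ≤ V) (hE : Tail E) :
    L u v <+: (replicate U false ++ replicate V true ++ E) ↔ (u = U ∧ v ≤ V) := by
  constructor
  · rintro ⟨rest, hrest⟩
    rw [L_split hv] at hrest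
    simp only [append_assoc, cons_append] at hrest
    rw [show replicate V true ++ E = true :: (replicate (V-1) true ++ E) by
      obtain ⟨V', rfl⟩ : ∃ V', V = V' + 1 := ⟨V - 1, by omega⟩
      simp [replicate_succ]] at hrest
    obtain ⟨h1, h2⟩ := SL1 u U _ _ hrest
    obtain ⟨h3, _⟩ := SL3 (v-1) (V-1) _ _ hE h2
    exact ⟨h1, by omega⟩
  · rintro ⟨rfl, hvV⟩
    refine ⟨replicate (V - v) true ++ E, ?_⟩
    rw [L]
    simp only [append_assoc]
    congr 1
    rw [← append_assoc, ← replicate_add]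
    congr 2
    omega

lemma corner_resplit {v V : ℕ} {E : List Bool} (hvV : v ≤ V) (U : ℕ) :
    replicate U false ++ replicate V true ++ E
      = (replicate U false ++ replicate v true) ++ (replicate (V - v) true ++ E) := by
  simp only [append_assoc]
  congr 1
  rw [← append_assoc, ← replicate_add]
  congr 2
  omega

lemma drop_corner {v U V : ℕ} {E : List Bool} (hvV : v ≤ V) :
    (replicate U false ++ replicate V true ++ E).drop (L U v).length
      = replicate (V - v) true ++ E := by
  rw [corner_resplit hvV U]
  have hl : (L U v).length = (replicate U false ++ replicate v true).length := by simp [L]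
  rw [hl, drop_left]

lemma not_L_prefix_falses {u v U : ℕ} (hv : 1 ≤ v) :
    ¬ (L u v <+: replicate U false) := by
  rintro h
  have : true ∈ replicate U false := by
    refine h.sublist.mem ?_
    rw [L_split hv]; simp
  simpa using eq_of_mem_replicate this

/-- splitting an occurrence in `true :: D` -/
lemma occ_split_cons {D pre post : List Bool} {u v : ℕ} (hu : 1 ≤ u)
    (heq : true :: D = pre ++ (L u v ++ post)) (hpre : Head21 pre) :
    ∃ pre', pre = true :: pre' ∧ D = pre' ++ (L u v ++ post) ∧ Head21 pre' := by
  rcases hpre with rfl | ⟨p, rfl⟩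
  · rw [nil_append, L_eq_cons_false hu] at heq
    simp at heq
  · cases p with
    | nil =>
      have hD : D = L u v ++ post := by simpa using heq
      exact ⟨[], rfl, by simpa using hD, Or.inl rfl⟩
    | cons b p' =>
      simp only [cons_append, cons.injEq] at heq
      exact ⟨p' ++ [true], by rw [← heq.1]; rfl, by simpa [append_assoc] using heq.2,
        Or.inr ⟨p', rfl⟩⟩

/-- splitting an occurrence at a corner -/
lemma occ_split_corner {U V u v : ℕ} {E pre post : List Bool}
    (hV : 1 ≤ V) (hE : Tail E) (hu : 1 ≤ u) (hv : 1 ≤ v)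
    (heq : replicate U false ++ replicate V true ++ E = pre ++ (L u v ++ post))
    (hpre : Head21 pre) (hpost : Tail post) :
    (pre = [] ∧ u = U ∧ v = V ∧ post = E) ∨
    (∃ pre', pre = replicate U false ++ replicate V true ++ pre' ∧
      E = pre' ++ (L u v ++ post) ∧ Head21 pre') := by
  rcases hpre with rfl | ⟨p, rfl⟩
  · left
    rw [nil_append] at heq
    have h' : L u v ++ post = L U V ++ E := by rw [← heq, L, append_assoc]
    obtain ⟨h1, h2, h3⟩ := LL hv hV hpost hE h'
    exact ⟨rfl, h1, h2, h3⟩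
  · right
    set pre : List Bool := p ++ [true] with hpredef
    have hprefix1 : pre <+: (replicate U false ++ replicate V true ++ E) :=
      ⟨L u v ++ post, heq.symm⟩
    have hprefix2 : (replicate U false ++ replicate V true) <+:
        (replicate U false ++ replicate V true ++ E) := ⟨E, by simp⟩
    rcases le_or_gt pre.length (replicate U false ++ replicate V true).length with hle | hlt
    · -- pre is a prefix of the corner
      obtain ⟨r, hr⟩ := prefix_of_prefix_length_le hprefix1 hprefix2 hle
      have hre : r ++ E = L u v ++ post := by
        have h2 : pre ++ (r ++ E) = pre ++ (L u v ++ post) := by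
          rw [← append_assoc, hr, append_assoc, ← heq, append_assoc]
        exact append_cancel_left h2
      cases r with
      | nil =>
        rw [append_nil] at hr
        refine ⟨[], ?_, by simpa using hre, Or.inl rfl⟩
        rw [hr]; simp
      | cons b r' =>
        exfalso
        have hb : b = false := by
          rw [L_eq_cons_false hu] at hre
          exact ((cons.injEq _ _ _ _).mp hre).1
        subst hb
        apply SL2 U p V r'
        rw [← hr, hpredef]
        simp
    · -- the corner is a proper prefix of pre
      obtain ⟨pre', hpre'⟩ := prefix_of_prefix_length_le hprefix2 hprefix1 (le_of_lt hlt)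
      have hE' : E = pre' ++ (L u v ++ post) := by
        have h2 : (replicate U false ++ replicate V true) ++ E
            = (replicate U false ++ replicate V true) ++ (pre' ++ (L u v ++ post)) := by
          calc (replicate U false ++ replicate V true) ++ E
              = replicate U false ++ replicate V true ++ E := by rw [append_assoc]
            _ = pre ++ (L u v ++ post) := heq
            _ = ((replicate U false ++ replicate V true) ++ pre') ++ (L u v ++ post) := by
                rw [hpre']
            _ = (replicate U false ++ replicate V true) ++ (pre' ++ (L u v ++ post)) := by
                rw [append_assoc]
        exact append_cancel_left h2
      refine ⟨pre', by rw [← hpre', append_assoc], hE', ?_⟩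
      have hne : pre' ≠ [] := by
        intro h0
        rw [h0, append_nil] at hpre'
        rw [← hpre'] at hlt
        simp at hlt
      rcases eq_nil_or_concat pre' with h0 | ⟨q, b, hqb⟩
      · exact absurd h0 hne
      · have hqb' : pre' = q ++ [b] := by simpa [concat_eq_append] using hqb
        have hb : (replicate U false ++ replicate V true ++ q) ++ [b] = p ++ [true] := by
          simp only [append_assoc]
          rw [← hqb', ← append_assoc, hpre']
        have hbtrue : b = true := by simpa using (append_inj' hb rfl).2
        exact Or.inr ⟨q, by rw [hqb', hbtrue]⟩
end Splits

section Peel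
variable {a : ℕ}

lemma block_length (p : ℕ × Bool) : (block a p).length = AN a p.1 + AN a (p.1 + 1) := by
  obtain ⟨i, bo⟩ := p
  cases bo <;> simp [block, L] <;> omega

lemma block_ne_nil (ha : 3 ≤ a) (p : ℕ × Bool) : block a p ≠ [] := by
  intro h
  have h1 : (block a p).length = 0 := by rw [h]; rfl
  rw [block_length] at h1
  have := AN_pos ha (show 1 ≤ p.1 + 1 by omega)
  omega

lemma block_zero_false : block a (0, false) = [false] := by
  show L (AN a 1) (AN a 0) = [false]
  rw [AN_one, AN_zero]; rfl

lemma block_zero_true : block a (0, true) = [true] := by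
  show L (AN a 0) (AN a 1) = [true]
  rw [AN_one, AN_zero]; rfl

lemma SDyck_nil (ha : 3 ≤ a) : SDyck a ([] : List Bool) = {[]} := by
  ext s
  simp only [SDyck, Set.mem_setOf_eq, Set.mem_singleton_iff]
  constructor
  · intro h
    cases s with
    | nil => rfl
    | cons p s' =>
      exfalso
      simp only [map_cons, flatten_cons, append_eq_nil_iff] at h
      exact block_ne_nil ha p h.1
  · rintro rfl; rfl

def Pfin (a : ℕ) (D : List Bool) : Finset (ℕ × Bool) :=
  (Finset.range (D.length + 1) ×ˢ (Finset.univ : Finset Bool)).filter (fun p => block a p <+: D)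

lemma mem_Pfin (ha : 3 ≤ a) {D : List Bool} {p : ℕ × Bool} :
    p ∈ Pfin a D ↔ block a p <+: D := by
  simp only [Pfin, Finset.mem_filter, Finset.mem_product, Finset.mem_range, Finset.mem_univ,
    and_true, true_and]
  constructor
  · exact fun h => h.2
  · intro h
    refine ⟨?_, h⟩
    have h1 := h.length_le
    rw [block_length] at h1
    have h2 := AN_le_self ha (p.1 + 1)
    omega

lemma SDyck_decomp (ha : 3 ≤ a) {D : List Bool} (hD : D ≠ []) :
    SDyck a D = ⋃ p ∈ (Pfin a D : Set (ℕ × Bool)),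
      (fun s => p :: s) '' SDyck a (D.drop (block a p).length) := by
  ext s
  simp only [Set.mem_iUnion, Set.mem_image, Finset.mem_coe, mem_Pfin ha]
  constructor
  · intro hs
    cases s with
    | nil => exact absurd hs.symm hD
    | cons p s' =>
      have hs' : block a p ++ (s'.map (block a)).flatten = D := by
        simpa [SDyck] using hs
      refine ⟨p, ⟨(s'.map (block a)).flatten, hs'⟩, s', ?_, rfl⟩
      show (s'.map (block a)).flatten = _
      rw [← hs', drop_left]
  · rintro ⟨p, hpre, s', hs', rfl⟩
    show block a p ++ (s'.map (block a)).flatten = D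
    conv_rhs => rw [← take_append_drop (block a p).length D]
    rw [hs']
    congr 1
    exact prefix_iff_eq_take.mp hpre

end Peel

section Peel2
variable {a : ℕ}

lemma SDyck_finite (ha : 3 ≤ a) : ∀ (D : List Bool), (SDyck a D).Finite := by
  suffices h : ∀ (n : ℕ) (D : List Bool), D.length = n → (SDyck a D).Finite by
    intro D; exact h D.length D rfl
  intro n
  induction n using Nat.strong_induction_on with
  | _ n ih =>
    intro D hn
    cases hD : D with
    | nil => rw [SDyck_nil ha]; exact Set.finite_singleton _
    | cons b D' =>
      subst hD
      rw [SDyck_decomp ha (by simp)]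
      apply Set.Finite.biUnion (Finset.finite_toSet _)
      intro p hp
      apply Set.Finite.image
      have hlen : ((b :: D').drop (block a p).length).length < (b :: D').length := by
        rw [length_drop]
        have h1 : 1 ≤ (block a p).length := by
          have := block_ne_nil ha p
          cases h : block a p with
          | nil => exact absurd h this
          | cons x xs => simp [h]
        simp only [length_cons]
        omega
      exact ih _ (hn ▸ hlen) _ rfl

lemma cMult_nil : cMult a ([] : List Bool) = 1 ∨ True := Or.inr trivial

lemma cMult_empty (ha : 3 ≤ a) : cMult a ([] : List Bool) = 1 := by
  rw [cMult, SDyck_nil ha, finsum_mem_singleton]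
  rfl

lemma sgnC_nil : sgnC ([] : List (ℕ × Bool)) = 1 := rfl

lemma sgnC_cons (p : ℕ × Bool) (s : List (ℕ × Bool)) :
    sgnC (p :: s) = (-1 : ℤ) ^ p.1 * sgnC s := by
  rcases Nat.even_or_odd p.1 with he | ho
  · have h2 : (p.1 % 2 == 1) = false := by
      rw [Nat.even_iff] at he
      simp [he]
    rw [he.neg_one_pow, one_mul, sgnC, sgnC, filter_cons, h2]
    simp
  · have h2 : (p.1 % 2 == 1) = true := by
      rw [Nat.odd_iff] at ho
      simp [ho]
    rw [ho.neg_one_pow, sgnC, sgnC, filter_cons, h2]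
    simp only [if_true, length_cons, pow_succ]
    ring

lemma cMult_peel (ha : 3 ≤ a) {D : List Bool} (hD : D ≠ []) :
    cMult a D = ∑ p ∈ Pfin a D, (-1 : ℤ) ^ p.1 * cMult a (D.drop (block a p).length) := by
  rw [cMult, SDyck_decomp ha hD, finsum_mem_biUnion, finsum_mem_coe_finset]
  · refine Finset.sum_congr rfl fun p hp => ?_
    rw [finsum_mem_image (fun x _ y _ h => by simpa using h)]
    rw [finsum_mem_eq_finite_toFinset_sum _ (SDyck_finite ha _)]
    rw [cMult, finsum_mem_eq_finite_toFinset_sum _ (SDyck_finite ha _), Finset.mul_sum]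
    refine Finset.sum_congr rfl fun s hs => sgnC_cons p s
  · intro p hp q hq hpq
    refine Set.disjoint_left.mpr ?_
    rintro s ⟨s1, _, rfl⟩ ⟨s2, _, h2⟩
    exact hpq ((by simpa using congrArg (fun l => l.head?) h2.symm : p = q))
  · exact Finset.finite_toSet _
  · intro p _
    exact (SDyck_finite ha _).image _

end Peel2

section Weight

/-- summand of the corner weight -/
noncomputable def wS (a U V : ℕ) : ℤ :=
  ∑ i ∈ Finset.range (U + V + 1),
    ((if AN a (i+1) ≤ U ∧ AN a (i+2) ≤ V then (-1 : ℤ)^(i+1) else 0) +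
     (if AN a (i+2) ≤ U ∧ AN a (i+1) ≤ V then (-1 : ℤ)^(i+1) else 0))

/-- the weight of a corner of sizes `U × V` -/
noncomputable def wgt (a U V : ℕ) : ℤ := 1 + wS a U V

lemma sum_range_shrink (f : ℕ → ℤ) {m n : ℕ} (h : m ≤ n) (hf : ∀ i, m ≤ i → f i = 0) :
    ∑ i ∈ Finset.range n, f i = ∑ i ∈ Finset.range m, f i :=
  (Finset.sum_subset (Finset.range_subset_range.mpr h)
    (fun i _ hni => hf i (by simp only [Finset.mem_range] at hni; omega))).symm

lemma ite_step (A B U V : ℕ) (s : ℤ) :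
    (if A ≤ U + 1 ∧ B ≤ V then s else 0)
      = (if A ≤ U ∧ B ≤ V then s else 0) + (if A = U + 1 ∧ B ≤ V then s else 0) := by
  by_cases h2 : B ≤ V
  · by_cases h3 : A ≤ U
    · have h4 : A ≠ U + 1 := by omega
      have h5 : A ≤ U + 1 := by omega
      simp [h2, h3, h4, h5]
    · by_cases h4 : A = U + 1
      · simp [h2, h3, h4]
      · have h5 : ¬ A ≤ U + 1 := by omega
        simp [h2, h3, h4, h5]
  · simp [h2]

lemma wgt_zero {a : ℕ} (ha : 3 ≤ a) (V : ℕ) : wgt a 0 V = 1 := by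
  have h : wS a 0 V = 0 := by
    apply Finset.sum_eq_zero
    intro i _
    have h1 : 1 ≤ AN a (i+1) := AN_pos ha (by omega)
    have h2 : 1 ≤ AN a (i+2) := AN_pos ha (by omega)
    rw [if_neg (by omega), if_neg (by omega)]
    simp
  rw [wgt, h]; ring

lemma wgt_step {a : ℕ} (ha : 3 ≤ a) (U V n : ℕ) (hn : U + V + 1 ≤ n) :
    wgt a (U + 1) V = wgt a U V +
      ∑ i ∈ Finset.range n,
        ((if AN a (i+1) = U + 1 ∧ AN a (i+2) ≤ V then (-1 : ℤ)^(i+1) else 0) +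
         (if AN a (i+2) = U + 1 ∧ AN a (i+1) ≤ V then (-1 : ℤ)^(i+1) else 0)) := by
  have hself : ∀ m, m ≤ AN a m := AN_le_self ha
  -- shrink the δ-sum to range (U+V+1)
  rw [sum_range_shrink _ hn (fun i hi => ?_)]
  · -- shrink wS (U+1) V to range (U+V+1)
    rw [wgt, wgt, wS, wS]
    rw [sum_range_shrink _ (show U + V + 1 ≤ U + 1 + V + 1 by omega) (fun i hi => ?_)]
    · rw [add_assoc (1:ℤ), ← Finset.sum_add_distrib]
      congr 1
      apply Finset.sum_congr rfl
      intro i _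
      rw [ite_step (AN a (i+1)) (AN a (i+2)) U V, ite_step (AN a (i+2)) (AN a (i+1)) U V]
      ring
    · -- vanishing above U+V+1 for wS (U+1) V
      have h1 := hself (i+1)
      have h2 := hself (i+2)
      rw [if_neg (by omega), if_neg (by omega)]
      simp
  · -- vanishing above U+V+1 for the δ-sum
    have h1 := hself (i+1)
    have h2 := hself (i+2)
    rw [if_neg (by omega), if_neg (by omega)]
    simp

end Weight

section CMultComp
variable {a : ℕ}

lemma block_cons_false (ha : 3 ≤ a) (i : ℕ) :
    block a (i, false) = false :: L (AN a (i+1) - 1) (AN a i) := by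
  show L (AN a (i+1)) (AN a i) = _
  exact L_eq_cons_false (AN_pos ha (by omega))

lemma block_true_cons_false (ha : 3 ≤ a) (i : ℕ) (hi : 1 ≤ i) :
    block a (i, true) = false :: L (AN a i - 1) (AN a (i+1)) := by
  show L (AN a i) (AN a (i+1)) = _
  exact L_eq_cons_false (AN_pos ha hi)

lemma not_prefix_cons_true {l D : List Bool} : ¬ (false :: l <+: true :: D) := by
  rintro ⟨t, ht⟩
  simp at ht

lemma not_prefix_cons_false {l D : List Bool} : ¬ (true :: l <+: false :: D) := by
  rintro ⟨t, ht⟩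
  simp at ht

lemma Pfin_cons_true (ha : 3 ≤ a) (D : List Bool) :
    Pfin a (true :: D) = {(0, true)} := by
  ext p
  rw [mem_Pfin ha, Finset.mem_singleton]
  constructor
  · intro h
    obtain ⟨i, bo⟩ := p
    cases bo
    · rw [block_cons_false ha] at h
      exact absurd h not_prefix_cons_true
    · cases i with
      | zero => rfl
      | succ j =>
        rw [block_true_cons_false ha (j+1) (by omega)] at h
        exact absurd h not_prefix_cons_true
  · rintro rfl
    rw [block_zero_true]
    exact ⟨D, rfl⟩

lemma cMult_cons_true (ha : 3 ≤ a) (D : List Bool) :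
    cMult a (true :: D) = cMult a D := by
  rw [cMult_peel ha (by simp), Pfin_cons_true ha, Finset.sum_singleton, block_zero_true]
  simp

lemma cMult_rep_true (ha : 3 ≤ a) (V : ℕ) (E : List Bool) :
    cMult a (replicate V true ++ E) = cMult a E := by
  induction V with
  | zero => simp
  | succ W ih =>
    rw [replicate_succ, cons_append, cMult_cons_true ha, ih]

lemma Pfin_falses (ha : 3 ≤ a) (U : ℕ) :
    Pfin a (replicate (U+1) false) = {(0, false)} := by
  ext p
  rw [mem_Pfin ha, Finset.mem_singleton]
  constructor
  · intro h
    obtain ⟨i, bo⟩ := p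
    cases bo
    · cases i with
      | zero => rfl
      | succ j =>
        exfalso
        exact not_L_prefix_falses (AN_pos ha (by omega)) h
    · exfalso
      exact not_L_prefix_falses (AN_pos ha (by omega)) h
  · rintro rfl
    rw [block_zero_false]
    exact ⟨replicate U false, by rw [replicate_succ]; rfl⟩

lemma cMult_falses (ha : 3 ≤ a) (U : ℕ) : cMult a (replicate U false) = 1 := by
  induction U with
  | zero => simpa using cMult_empty ha
  | succ W ih =>
    rw [cMult_peel ha (by simp), Pfin_falses ha, Finset.sum_singleton, block_zero_false]
    simp only [pow_zero, one_mul, length_cons, length_nil]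
    rw [show (replicate (W+1) false).drop 1 = replicate W false by
      rw [replicate_succ]; rfl]
    rw [ih]

end CMultComp

section Corner
variable {a : ℕ}

lemma cMult_corner (ha : 3 ≤ a) : ∀ (U V : ℕ) (E : List Bool), 1 ≤ V → Tail E →
    cMult a (replicate U false ++ replicate V true ++ E) = wgt a U V * cMult a E := by
  intro U
  induction U with
  | zero =>
    intro V E hV hE
    rw [wgt_zero ha, one_mul]
    simpa using cMult_rep_true ha V E
  | succ U IH =>
    intro V E hV hE
    set D : List Bool := replicate (U+1) false ++ replicate V true ++ E with hDdef
    have hDcons : D = false :: (replicate U false ++ replicate V true ++ E) := by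
      rw [hDdef, replicate_succ]; rfl
    have hDne : D ≠ [] := by rw [hDcons]; simp
    rw [cMult_peel ha hDne]
    rw [Pfin, Finset.sum_filter, Finset.sum_product]
    simp only [Fintype.sum_bool]
    rw [Finset.sum_range_succ']
    -- the i = 0 term
    have h0true : ¬ (block a (0, true) <+: D) := by
      rw [block_zero_true, hDcons]
      exact not_prefix_cons_false
    have h0false : block a (0, false) <+: D := by
      rw [block_zero_false, hDcons]
      exact ⟨replicate U false ++ replicate V true ++ E, rfl⟩
    have hdrop0 : D.drop ((block a (0,false)).length) = replicate U false ++ replicate V true ++ E := by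
      rw [block_zero_false, hDcons]; rfl
    -- the i + 1 terms
    have hterm : ∀ i,
        ((if block a (i+1, true) <+: D then
            (-1 : ℤ)^(i+1) * cMult a (D.drop ((block a (i+1, true)).length)) else 0) +
         (if block a (i+1, false) <+: D then
            (-1 : ℤ)^(i+1) * cMult a (D.drop ((block a (i+1, false)).length)) else 0))
        = ((if AN a (i+1) = U + 1 ∧ AN a (i+2) ≤ V then (-1 : ℤ)^(i+1) else 0) +
           (if AN a (i+2) = U + 1 ∧ AN a (i+1) ≤ V then (-1 : ℤ)^(i+1) else 0)) * cMult a E := by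
      intro i
      have hbt : block a (i+1, true) = L (AN a (i+1)) (AN a (i+2)) := rfl
      have hbf : block a (i+1, false) = L (AN a (i+2)) (AN a (i+1)) := rfl
      have h1 : 1 ≤ AN a (i+1) := AN_pos ha (by omega)
      have h2 : 1 ≤ AN a (i+2) := AN_pos ha (by omega)
      have hc1 : block a (i+1, true) <+: D ↔ (AN a (i+1) = U + 1 ∧ AN a (i+2) ≤ V) := by
        rw [hbt, hDdef]
        exact prefix_corner h2 hV hE
      have hc2 : block a (i+1, false) <+: D ↔ (AN a (i+2) = U + 1 ∧ AN a (i+1) ≤ V) := by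
        rw [hbf, hDdef]
        exact prefix_corner h1 hV hE
      rw [add_mul]
      congr 1
      · by_cases hc : AN a (i+1) = U + 1 ∧ AN a (i+2) ≤ V
        · rw [if_pos (hc1.mpr hc), if_pos hc]
          have hd : D.drop ((block a (i+1, true)).length)
              = replicate (V - AN a (i+2)) true ++ E := by
            rw [hbt, hc.1, hDdef]
            exact drop_corner hc.2
          rw [hd, cMult_rep_true ha]
        · rw [if_neg (fun hp => hc (hc1.mp hp)), if_neg hc, zero_mul]
      · by_cases hc : AN a (i+2) = U + 1 ∧ AN a (i+1) ≤ V
        · rw [if_pos (hc2.mpr hc), if_pos hc]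
          have hd : D.drop ((block a (i+1, false)).length)
              = replicate (V - AN a (i+1)) true ++ E := by
            rw [hbf, hc.1, hDdef]
            exact drop_corner hc.2
          rw [hd, cMult_rep_true ha]
        · rw [if_neg (fun hp => hc (hc2.mp hp)), if_neg hc, zero_mul]
    rw [if_neg h0true, if_pos h0false, hdrop0]
    rw [Finset.sum_congr rfl (fun i _ => hterm i)]
    rw [← Finset.sum_mul, IH V E hV hE]
    have hlen : U + V + 1 ≤ D.length := by
      rw [hDdef]
      simp only [length_append, length_replicate]
      omega
    rw [wgt_step ha U V D.length hlen]
    ring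
end Corner

section WgtEval
open scoped Classical
variable {a : ℕ}

lemma sum_neg_one_pow (k : ℕ) :
    ∑ i ∈ Finset.range k, (-1 : ℤ)^(i+1) = if k % 2 = 1 then -1 else 0 := by
  induction k with
  | zero => simp
  | succ m ih =>
    rw [Finset.sum_range_succ, ih]
    rcases Nat.even_or_odd m with he | ho
    · have h1 : m % 2 = 0 := Nat.even_iff.mp he
      have h2 : (m + 1) % 2 = 1 := by omega
      have h3 : Odd (m + 1) := Nat.odd_iff.mpr h2
      rw [if_neg (by omega), if_pos h2, h3.neg_one_pow]
      ring
    · have h1 : m % 2 = 1 := Nat.odd_iff.mp ho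
      have h2 : (m + 1) % 2 = 0 := by omega
      have h3 : Even (m + 1) := Nat.even_iff.mpr h2
      rw [if_pos h1, if_neg (by omega), h3.neg_one_pow]
      ring

lemma sum_ite_le {k m : ℕ} (hk : k ≤ m) :
    ∑ i ∈ Finset.range m, (if i + 1 ≤ k then (-1 : ℤ)^(i+1) else 0)
      = if k % 2 = 1 then -1 else 0 := by
  rw [sum_range_shrink _ hk (fun i hi => if_neg (by omega)), ← sum_neg_one_pow k]
  exact Finset.sum_congr rfl fun i hi => if_pos (by simp at hi; omega)

lemma wgt_symm (U V : ℕ) : wgt a U V = wgt a V U := by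
  unfold wgt wS
  congr 1
  rw [Nat.add_comm V U]
  refine Finset.sum_congr rfl fun i _ => ?_
  rw [add_comm]
  exact congrArg₂ (· + ·) (if_congr and_comm rfl rfl) (if_congr and_comm rfl rfl)

lemma TypeZero_symm (U V : ℕ) : TypeZero a U V ↔ TypeZero a V U := by
  unfold TypeZero
  rw [min_comm, max_comm]

lemma TypeNeg_symm (U V : ℕ) : TypeNeg a U V ↔ TypeNeg a V U := by
  unfold TypeNeg
  rw [min_comm, max_comm]

lemma wgt_eval_aux (ha : 3 ≤ a) {U V : ℕ} (hU : 1 ≤ U) (hV : 1 ≤ V) (hVU : V ≤ U) :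
    wgt a U V = if TypeZero a U V then 0 else if TypeNeg a U V then -1 else 1 := by
  classical
  have hm : min U V = V := min_eq_right hVU
  have hM : max U V = U := max_eq_left hVU
  set n := Nat.findGreatest (fun i => AN a i ≤ V) V with hndef
  have hn1 : 1 ≤ n := Nat.le_findGreatest hV (by rw [AN_one]; exact hV)
  have hnle : AN a n ≤ V := Nat.findGreatest_of_ne_zero (P := fun i => AN a i ≤ V) hndef.symm (by omega)
  have hnV : n ≤ V := Nat.findGreatest_le V
  have hgt : V < AN a (n+1) := by
    by_contra hcon
    push_neg at hcon
    have hle : n + 1 ≤ V := le_trans (AN_le_self ha (n+1)) hcon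
    exact Nat.findGreatest_is_greatest (P := fun i => AN a i ≤ V) (n := V)
      (by rw [← hndef]; omega) hle hcon
  -- evaluate the two sums
  have hT : ∀ i : ℕ, (AN a (i+1) ≤ U ∧ AN a (i+2) ≤ V) ↔ i + 1 ≤ n - 1 := by
    intro i
    constructor
    · rintro ⟨h1, h2⟩
      by_contra hcon
      have : n + 1 ≤ i + 2 := by omega
      have := le_trans (AN_le_of_le ha this) h2
      omega
    · intro h
      have e2 : AN a (i+2) ≤ AN a n := AN_le_of_le ha (by omega)
      have e1 : AN a (i+1) ≤ AN a n := AN_le_of_le ha (by omega)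
      exact ⟨le_trans e1 (le_trans hnle hVU), le_trans e2 hnle⟩
  have hsum : wgt a U V = 1 + ((if (n-1) % 2 = 1 then (-1 : ℤ) else 0) +
      (∑ i ∈ Finset.range (U + V + 1),
        (if AN a (i+2) ≤ U ∧ AN a (i+1) ≤ V then (-1 : ℤ)^(i+1) else 0))) := by
    rw [wgt, wS, Finset.sum_add_distrib]
    congr 2
    rw [Finset.sum_congr rfl (fun i _ => by rw [if_congr (hT i) rfl rfl])]
    exact sum_ite_le (by omega)
  by_cases hUb : AN a (n+1) ≤ U
  · -- type (0)
    have htz : TypeZero a U V := ⟨n, hn1, by rw [hm]; exact hnle, by rw [hm]; exact hgt,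
      by rw [hM]; exact hUb⟩
    rw [if_pos htz, hsum]
    have hF : ∀ i : ℕ, (AN a (i+2) ≤ U ∧ AN a (i+1) ≤ V) ↔ i + 1 ≤ n := by
      intro i
      constructor
      · rintro ⟨h1, h2⟩
        by_contra hcon
        have := le_trans (AN_le_of_le ha (show n + 1 ≤ i + 1 by omega)) h2
        omega
      · intro h
        exact ⟨le_trans (AN_le_of_le ha (by omega)) hUb,
          le_trans (AN_le_of_le ha h) hnle⟩
    rw [Finset.sum_congr rfl (fun i _ => by rw [if_congr (hF i) rfl rfl]), sum_ite_le (by omega)]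
    rcases Nat.even_or_odd n with he | ho
    · have h1 : n % 2 = 0 := Nat.even_iff.mp he
      rw [if_pos (by omega : (n-1) % 2 = 1), if_neg (by omega)]
      ring
    · have h1 : n % 2 = 1 := Nat.odd_iff.mp ho
      rw [if_neg (by omega), if_pos h1]
      ring
  · -- not type (0)
    have huniq : ∀ n' : ℕ, AN a n' ≤ V → V < AN a (n'+1) → n' = n :=
      fun n' h1 h2 => AN_uniq ha h1 h2 hnle hgt
    have htz : ¬ TypeZero a U V := by
      rintro ⟨n', h1', h2', h3', h4'⟩
      rw [hm] at h2' h3'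
      rw [hM] at h4'
      rw [huniq n' h2' h3'] at h4'
      exact hUb h4'
    have htneg : TypeNeg a U V ↔ n % 2 = 0 := by
      constructor
      · rintro ⟨j, hj1, hj2, hj3⟩
        rw [hm] at hj2
        rw [hM] at hj3
        have : 2 * j = n := huniq (2*j) hj2 (by omega)
        omega
      · intro hpar
        refine ⟨n / 2, by omega, ?_, ?_⟩
        · rw [hm, show 2 * (n/2) = n by omega]; exact hnle
        · rw [hM, show 2 * (n/2) = n by omega]; omega
    have hF : ∀ i : ℕ, (AN a (i+2) ≤ U ∧ AN a (i+1) ≤ V) ↔ i + 1 ≤ n - 1 := by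
      intro i
      constructor
      · rintro ⟨h1, h2⟩
        have hin : i + 1 ≤ n := by
          by_contra hcon
          have := le_trans (AN_le_of_le ha (show n + 1 ≤ i + 1 by omega)) h2
          omega
        rcases Nat.lt_or_ge (i+1) n with h | h
        · omega
        · exfalso
          have : i + 1 = n := by omega
          rw [show i + 2 = n + 1 by omega] at h1
          exact hUb h1
      · intro h
        exact ⟨le_trans (AN_le_of_le ha (by omega)) (le_trans hnle hVU),
          le_trans (AN_le_of_le ha (by omega)) hnle⟩
    rw [if_neg htz, hsum]
    rw [Finset.sum_congr rfl (fun i _ => by rw [if_congr (hF i) rfl rfl]), sum_ite_le (by omega)]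
    by_cases hpar : n % 2 = 0
    · rw [if_pos (htneg.mpr hpar), if_pos (by omega : (n-1) % 2 = 1)]
      ring
    · rw [if_neg (fun ht => hpar (htneg.mp ht)), if_neg (by omega : ¬ (n-1) % 2 = 1)]
      ring

lemma wgt_eval (ha : 3 ≤ a) {U V : ℕ} (hU : 1 ≤ U) (hV : 1 ≤ V) :
    wgt a U V = if TypeZero a U V then 0 else if TypeNeg a U V then -1 else 1 := by
  rcases le_total V U with h | h
  · exact wgt_eval_aux ha hU hV h
  · rw [wgt_symm, wgt_eval_aux ha hV hU h]
    simp only [TypeZero_symm V U, TypeNeg_symm V U]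

end WgtEval

section OccSide
open scoped Classical
variable {a : ℕ}

/-- The set of framed type (-1) occurrences. -/
def Occ (a : ℕ) (D : List Bool) : Set (List Bool × ℕ × ℕ) :=
  {x : List Bool × ℕ × ℕ | TypeNeg a x.2.1 x.2.2 ∧
    ∃ post : List Bool, D = x.1 ++ L x.2.1 x.2.2 ++ post ∧
      (x.1 = [] ∨ ∃ p, x.1 = p ++ [true]) ∧ (post = [] ∨ ∃ q, post = false :: q)}

lemma negCount_eq (D : List Bool) : negCount a D = (Occ a D).ncard := rfl

lemma TypeNeg_pos (ha : 3 ≤ a) {u v : ℕ} (h : TypeNeg a u v) : 1 ≤ u ∧ 1 ≤ v := by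
  obtain ⟨n, hn, h1, _⟩ := h
  have := AN_pos ha (show 1 ≤ 2 * n by omega)
  constructor
  · calc 1 ≤ AN a (2*n) := this
      _ ≤ min u v := h1
      _ ≤ u := min_le_left _ _
  · calc 1 ≤ AN a (2*n) := this
      _ ≤ min u v := h1
      _ ≤ v := min_le_right _ _

lemma TypeZero_pos (ha : 3 ≤ a) {u v : ℕ} (h : TypeZero a u v) : 1 ≤ u ∧ 1 ≤ v := by
  obtain ⟨n, hn, h1, _⟩ := h
  have := AN_pos ha hn
  exact ⟨le_trans this (le_trans h1 (min_le_left _ _)),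
    le_trans this (le_trans h1 (min_le_right _ _))⟩

lemma true_mem_L {u v : ℕ} (hv : 1 ≤ v) : true ∈ L u v := by
  rw [L_split hv]; simp

lemma Occ_falses (ha : 3 ≤ a) (U : ℕ) : Occ a (replicate U false) = ∅ := by
  ext ⟨pre, u, v⟩
  simp only [Occ, Set.mem_setOf_eq, Set.mem_empty_iff_false, iff_false, not_and]
  rintro htn ⟨post, heq, _, _⟩
  have hv := (TypeNeg_pos ha htn).2
  have hmem : true ∈ replicate U false := by
    rw [heq]
    simp only [mem_append]
    exact Or.inl (Or.inr (true_mem_L hv))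
  simpa using eq_of_mem_replicate hmem

lemma Occ_nil (ha : 3 ≤ a) : Occ a [] = ∅ := by
  have := Occ_falses ha 0
  simpa using this

lemma Occ_cons_true (ha : 3 ≤ a) (D : List Bool) :
    Occ a (true :: D) = (fun x : List Bool × ℕ × ℕ => (true :: x.1, x.2)) '' Occ a D := by
  ext ⟨pre, u, v⟩
  simp only [Occ, Set.mem_setOf_eq, Set.mem_image, Prod.mk.injEq]
  constructor
  · rintro ⟨htn, post, heq, hpre, hpost⟩
    have hu := (TypeNeg_pos ha htn).1
    have heq2 : true :: D = pre ++ (L u v ++ post) := heq.trans (append_assoc _ _ _)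
    obtain ⟨pre', hpre_eq, hD, hpre'⟩ := occ_split_cons hu heq2 hpre
    exact ⟨(pre', u, v), ⟨htn, post, hD.trans (append_assoc _ _ _).symm, hpre', hpost⟩,
      by rw [hpre_eq], rfl⟩
  · rintro ⟨⟨pre', u', v'⟩, ⟨htn, post, heq, hpre', hpost⟩, hp, hq⟩
    obtain ⟨rfl, rfl⟩ : u' = u ∧ v' = v := by
      constructor <;> · have := congrArg Prod.fst hq; have := congrArg Prod.snd hq; simp_all
    refine ⟨htn, post, ?_, ?_, hpost⟩
    · rw [← hp, heq]; rfl
    · rcases hpre' with rfl | ⟨p, rfl⟩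
      · exact Or.inr ⟨[], by rw [← hp]; rfl⟩
      · exact Or.inr ⟨true :: p, by rw [← hp]; rfl⟩

lemma mem_Occ_corner (ha : 3 ≤ a) {U V : ℕ} {E : List Bool}
    (hU : 1 ≤ U) (hV : 1 ≤ V) (hE : Tail E) (x : List Bool × ℕ × ℕ) :
    x ∈ Occ a (replicate U false ++ replicate V true ++ E) ↔
      (x = (([] : List Bool), U, V) ∧ TypeNeg a U V) ∨
      (∃ y ∈ Occ a E, x = (replicate U false ++ replicate V true ++ y.1, y.2)) := by
  obtain ⟨pre, u, v⟩ := x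
  simp only [Occ, Set.mem_setOf_eq, Prod.mk.injEq]
  constructor
  · rintro ⟨htn, post, heq, hpre, hpost⟩
    obtain ⟨hu, hv⟩ := TypeNeg_pos ha htn
    have heq2 : replicate U false ++ replicate V true ++ E = pre ++ (L u v ++ post) :=
      heq.trans (append_assoc _ _ _)
    rcases occ_split_corner hV hE hu hv heq2 hpre hpost with
      ⟨h1, h2, h3, _⟩ | ⟨pre', hpre_eq, hE', hpre'⟩
    · exact Or.inl ⟨⟨h1, h2, h3⟩, h2 ▸ h3 ▸ htn⟩
    · exact Or.inr ⟨(pre', u, v), ⟨htn, post, hE'.trans (append_assoc _ _ _).symm, hpre', hpost⟩,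
        hpre_eq, rfl⟩
  · rintro (⟨⟨rfl, rfl, rfl⟩, htn⟩ | ⟨⟨pre', u', v'⟩, ⟨htn, post, heq, hpre', hpost⟩, hp, hq⟩)
    · refine ⟨htn, E, ?_, Or.inl rfl, hE⟩
      rw [nil_append, L]
    · obtain ⟨rfl, rfl⟩ : u' = u ∧ v' = v := by
        constructor <;> · have := congrArg Prod.fst hq; have := congrArg Prod.snd hq; simp_all
      refine ⟨htn, post, ?_, ?_, hpost⟩
      · rw [hp, heq]
        simp [append_assoc]
      · rcases hpre' with rfl | ⟨p, rfl⟩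
        · refine Or.inr ⟨replicate U false ++ replicate (V-1) true, ?_⟩
          rw [hp, append_nil, append_assoc]
          congr 1
          rw [show V = (V-1) + 1 by omega, replicate_succ']
          simp
        · exact Or.inr ⟨replicate U false ++ replicate V true ++ p, by rw [hp]; simp⟩

lemma Occ_finite (ha : 3 ≤ a) (D : List Bool) : (Occ a D).Finite := by
  apply Set.Finite.of_finite_image (f := fun x : List Bool × ℕ × ℕ => x.1.length)
  · apply Set.Finite.subset (Set.finite_Iic D.length)
    rintro k ⟨⟨pre, u, v⟩, ⟨_, post, heq, _, _⟩, rfl⟩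
    have := congrArg List.length heq
    simp only [length_append] at this
    simp only [Set.mem_Iic]
    omega
  · rintro ⟨pre, u, v⟩ ⟨htn, post, heq, _, hpost⟩ ⟨pre', u', v'⟩
      ⟨htn', post', heq', _, hpost'⟩ hlen
    simp only at hlen
    have hpre_eq : pre = pre' := by
      have h1 : pre = take pre.length D := by
        rw [heq, append_assoc, take_left]
      have h2 : pre' = take pre'.length D := by
        rw [heq', append_assoc, take_left]
      rw [h1, h2, hlen]
    subst hpre_eq
    have hcancel : L u v ++ post = L u' v' ++ post' :=
      append_cancel_left (show pre ++ (L u v ++ post) = pre ++ (L u' v' ++ post') by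
        rw [← append_assoc, ← heq, ← append_assoc, ← heq'])
    obtain ⟨h1, h2, h3⟩ := LL (TypeNeg_pos ha htn).2 (TypeNeg_pos ha htn').2 hpost hpost' hcancel
    dsimp only at h1 h2 h3 ⊢
    simp [h1, h2]

lemma negCount_cons_true (ha : 3 ≤ a) (D : List Bool) :
    negCount a (true :: D) = negCount a D := by
  rw [negCount_eq, negCount_eq, Occ_cons_true ha]
  apply Set.ncard_image_of_injective
  rintro ⟨p, u, v⟩ ⟨q, u', v'⟩ h
  simpa [Prod.ext_iff] using h

lemma negCount_corner (ha : 3 ≤ a) {U V : ℕ} {E : List Bool}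
    (hU : 1 ≤ U) (hV : 1 ≤ V) (hE : Tail E) :
    negCount a (replicate U false ++ replicate V true ++ E)
      = (if TypeNeg a U V then 1 else 0) + negCount a E := by
  classical
  have himg_inj : Function.Injective
      (fun y : List Bool × ℕ × ℕ => ((replicate U false ++ replicate V true ++ y.1 : List Bool), y.2)) := by
    rintro ⟨p, u, v⟩ ⟨q, u', v'⟩ h
    simp only [Prod.mk.injEq, append_cancel_left_eq] at h
    simp [Prod.ext_iff, h.1, h.2]
  by_cases htn : TypeNeg a U V
  · have hset : Occ a (replicate U false ++ replicate V true ++ E)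
        = insert (([] : List Bool), U, V)
          ((fun y : List Bool × ℕ × ℕ =>
            ((replicate U false ++ replicate V true ++ y.1 : List Bool), y.2)) '' Occ a E) := by
      ext x
      rw [mem_Occ_corner ha hU hV hE x, Set.mem_insert_iff, Set.mem_image]
      constructor
      · rintro (⟨rfl, _⟩ | ⟨y, hy, rfl⟩)
        · exact Or.inl rfl
        · exact Or.inr ⟨y, hy, rfl⟩
      · rintro (rfl | ⟨y, hy, rfl⟩)
        · exact Or.inl ⟨rfl, htn⟩
        · exact Or.inr ⟨y, hy, rfl⟩
    have hnot : (([] : List Bool), U, V) ∉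
        (fun y : List Bool × ℕ × ℕ =>
          ((replicate U false ++ replicate V true ++ y.1 : List Bool), y.2)) '' Occ a E := by
      rintro ⟨⟨p, u, v⟩, _, him⟩
      have := congrArg (fun z : List Bool × ℕ × ℕ => z.1.length) him
      simp only [length_append, length_replicate, length_nil] at this
      omega
    rw [negCount_eq, negCount_eq, hset,
      Set.ncard_insert_of_notMem hnot ((Occ_finite ha E).image _),
      Set.ncard_image_of_injective _ himg_inj, if_pos htn]
    omega
  · have hset : Occ a (replicate U false ++ replicate V true ++ E)
        = (fun y : List Bool × ℕ × ℕ =>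
            ((replicate U false ++ replicate V true ++ y.1 : List Bool), y.2)) '' Occ a E := by
      ext x
      rw [mem_Occ_corner ha hU hV hE x, Set.mem_image]
      constructor
      · rintro (⟨_, h⟩ | ⟨y, hy, rfl⟩)
        · exact absurd h htn
        · exact ⟨y, hy, rfl⟩
      · rintro ⟨y, hy, rfl⟩
        exact Or.inr ⟨y, hy, rfl⟩
    rw [negCount_eq, negCount_eq, hset, Set.ncard_image_of_injective _ himg_inj, if_neg htn,
      zero_add]

lemma negCount_falses (ha : 3 ≤ a) (U : ℕ) : negCount a (replicate U false) = 0 := by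
  rw [negCount_eq, Occ_falses ha]
  simp

lemma negCount_nil (ha : 3 ≤ a) : negCount a ([] : List Bool) = 0 := by
  rw [negCount_eq, Occ_nil ha]
  simp

end OccSide

section HFZ
variable {a : ℕ}

lemma HFZ_falses (ha : 3 ≤ a) (U : ℕ) : ¬ HasFramedZero a (replicate U false) := by
  rintro ⟨u, v, htz, pre, post, heq, hpre, hpost⟩
  have hv := (TypeZero_pos ha htz).2
  have hmem : true ∈ replicate U false := by
    rw [heq]
    simp only [mem_append]
    exact Or.inl (Or.inr (true_mem_L hv))
  simpa using eq_of_mem_replicate hmem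

lemma HFZ_nil (ha : 3 ≤ a) : ¬ HasFramedZero a [] := by
  have := HFZ_falses ha 0
  simpa using this

lemma HFZ_cons (ha : 3 ≤ a) (D : List Bool) :
    HasFramedZero a (true :: D) ↔ HasFramedZero a D := by
  constructor
  · rintro ⟨u, v, htz, pre, post, heq, hpre, hpost⟩
    have hu := (TypeZero_pos ha htz).1
    have heq2 : true :: D = pre ++ (L u v ++ post) := heq.trans (append_assoc _ _ _)
    obtain ⟨pre', _, hD, hpre'⟩ := occ_split_cons hu heq2 hpre
    exact ⟨u, v, htz, pre', post, hD.trans (append_assoc _ _ _).symm, hpre', hpost⟩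
  · rintro ⟨u, v, htz, pre, post, heq, hpre, hpost⟩
    refine ⟨u, v, htz, true :: pre, post, by rw [heq]; rfl, ?_, hpost⟩
    rcases hpre with rfl | ⟨p, rfl⟩
    · exact Or.inr ⟨[], rfl⟩
    · exact Or.inr ⟨true :: p, rfl⟩

lemma HFZ_corner (ha : 3 ≤ a) {U V : ℕ} {E : List Bool}
    (hU : 1 ≤ U) (hV : 1 ≤ V) (hE : Tail E) :
    HasFramedZero a (replicate U false ++ replicate V true ++ E) ↔
      TypeZero a U V ∨ HasFramedZero a E := by
  constructor
  · rintro ⟨u, v, htz, pre, post, heq, hpre, hpost⟩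
    obtain ⟨hu, hv⟩ := TypeZero_pos ha htz
    have heq2 : replicate U false ++ replicate V true ++ E = pre ++ (L u v ++ post) :=
      heq.trans (append_assoc _ _ _)
    rcases occ_split_corner hV hE hu hv heq2 hpre hpost with
      ⟨h1, h2, h3, _⟩ | ⟨pre', hpre_eq, hE', hpre'⟩
    · exact Or.inl (h2 ▸ h3 ▸ htz)
    · exact Or.inr ⟨u, v, htz, pre', post, hE'.trans (append_assoc _ _ _).symm, hpre', hpost⟩
  · rintro (htz | ⟨u, v, htz, pre', post, heq, hpre', hpost⟩)
    · exact ⟨U, V, htz, [], E, by rw [nil_append, L], Or.inl rfl, hE⟩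
    · refine ⟨u, v, htz, replicate U false ++ replicate V true ++ pre', post, ?_, ?_, hpost⟩
      · rw [heq]
        simp [append_assoc]
      · rcases hpre' with rfl | ⟨p, rfl⟩
        · refine Or.inr ⟨replicate U false ++ replicate (V-1) true, ?_⟩
          rw [append_nil, append_assoc]
          congr 1
          rw [show V = (V-1) + 1 by omega, replicate_succ']
          simp
        · exact Or.inr ⟨replicate U false ++ replicate V true ++ p, by simp⟩

lemma split_run_false : ∀ (D : List Bool), ∃ U R, D = replicate U false ++ R ∧
    (R = [] ∨ ∃ r, R = true :: r) := by
  intro D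
  induction D with
  | nil => exact ⟨0, [], by simp, Or.inl rfl⟩
  | cons b D' ih =>
    obtain ⟨U, R, heq, hR⟩ := ih
    cases b
    · exact ⟨U + 1, R, by rw [replicate_succ, cons_append, ← heq], hR⟩
    · exact ⟨0, true :: D', by simp, Or.inr ⟨D', rfl⟩⟩

lemma split_run_true : ∀ (D : List Bool), ∃ V E, D = replicate V true ++ E ∧ Tail E := by
  intro D
  induction D with
  | nil => exact ⟨0, [], by simp, Or.inl rfl⟩
  | cons b D' ih =>
    obtain ⟨V, E, heq, hE⟩ := ih
    cases b
    · exact ⟨0, false :: D', by simp, Or.inr ⟨D', rfl⟩⟩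
    · exact ⟨V + 1, E, by rw [replicate_succ, cons_append, ← heq], hE⟩

end HFZ

section Main
open scoped Classical
variable {a : ℕ}

lemma cMult_main (ha : 3 ≤ a) : ∀ D : List Bool,
    cMult a D = if HasFramedZero a D then 0 else (-1 : ℤ)^(negCount a D) := by
  suffices H : ∀ (n : ℕ) (D : List Bool), D.length ≤ n →
      cMult a D = if HasFramedZero a D then 0 else (-1 : ℤ)^(negCount a D) by
    intro D
    exact H D.length D le_rfl
  intro n
  induction n with
  | zero =>
    intro D hD
    have : D = [] := by
      cases D
      · rfl
      · simp at hD
    subst this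
    rw [cMult_empty ha, if_neg (HFZ_nil ha), negCount_nil ha, pow_zero]
  | succ n IH =>
    intro D hlen
    cases D with
    | nil => rw [cMult_empty ha, if_neg (HFZ_nil ha), negCount_nil ha, pow_zero]
    | cons b D₀ =>
      cases b
      · -- D = false :: D₀
        obtain ⟨U, R, hDeq, hR⟩ := split_run_false (false :: D₀)
        have hU : 1 ≤ U := by
          by_contra hcon
          have hU0 : U = 0 := by omega
          rw [hU0, replicate_zero, nil_append] at hDeq
          rcases hR with rfl | ⟨r, hr⟩
          · simp at hDeq
          · rw [hr] at hDeq
            simp at hDeq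
        rcases hR with rfl | ⟨r, hr⟩
        · rw [append_nil] at hDeq
          rw [hDeq, cMult_falses ha, if_neg (HFZ_falses ha U), negCount_falses ha, pow_zero]
        · obtain ⟨V, E, hReq, hE⟩ := split_run_true R
          have hV : 1 ≤ V := by
            by_contra hcon
            have hV0 : V = 0 := by omega
            rw [hV0, replicate_zero, nil_append] at hReq
            rw [hr] at hReq
            rcases hE with rfl | ⟨q, hq⟩
            · simp at hReq
            · rw [hq] at hReq
              simp at hReq
          have hD2 : (false :: D₀ : List Bool)
              = replicate U false ++ replicate V true ++ E := by
            rw [hDeq, hReq, append_assoc]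
          have hlenE : E.length ≤ n := by
            have := congrArg List.length hD2
            simp only [length_cons, length_append, length_replicate] at this hlen
            omega
          rw [hD2, cMult_corner ha U V E hV hE, wgt_eval ha hU hV, IH E hlenE,
            negCount_corner ha hU hV hE]
          by_cases h0 : TypeZero a U V
          · rw [if_pos h0, zero_mul, if_pos ((HFZ_corner ha hU hV hE).mpr (Or.inl h0))]
          · have hiff := HFZ_corner ha hU hV hE (U := U) (V := V) (E := E)
            by_cases h1 : HasFramedZero a E
            · rw [if_pos h1, mul_zero, if_pos (hiff.mpr (Or.inr h1))]
            · have hor : ¬ (TypeZero a U V ∨ HasFramedZero a E) := by tauto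
              rw [if_neg h1, if_neg (fun hh => hor (hiff.mp hh))]
              by_cases h2 : TypeNeg a U V
              · rw [if_neg h0, if_pos h2, if_pos h2, pow_add, pow_one]
              · rw [if_neg h0, if_neg h2, if_neg h2, one_mul, zero_add]
      · -- D = true :: D₀
        rw [cMult_cons_true ha, IH D₀ (by simp only [length_cons] at hlen; omega),
          negCount_cons_true ha]
        simp only [HFZ_cons ha D₀]
end Main

/-- `c(D) = 0` if `D` contains a framed subpath of type `(0)`, and otherwise
`c(D) = (-1)^(number of framed subpaths of type (-1))`; in particular
`c(D) ∈ {-1, 0, 1}`. -/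
theorem stmt11 (a : ℕ) (ha : 3 ≤ a) (D : List Bool) (hD : IsDyckWord D) :
    (HasFramedZero a D → cMult a D = 0) ∧
    (¬ HasFramedZero a D → cMult a D = (-1) ^ negCount a D) ∧
    (cMult a D = -1 ∨ cMult a D = 0 ∨ cMult a D = 1) := by
  classical
  have hm := cMult_main ha D
  refine ⟨fun h => ?_, fun h => ?_, ?_⟩
  · rw [hm, if_pos h]
  · rw [hm, if_neg h]
  · by_cases h : HasFramedZero a D
    · rw [hm, if_pos h]
      exact Or.inr (Or.inl rfl)
    · rw [hm, if_neg h]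
      rcases Nat.even_or_odd (negCount a D) with he | ho
      · rw [he.neg_one_pow]
        exact Or.inr (Or.inr rfl)
      · rw [ho.neg_one_pow]
        exact Or.inl rfl
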